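/- Let α > 2 be the real root of x³ − 2x² − 1 = 0 and set d = (3 − α)/2. Suppose the pillar densities δ_n = o_n/m_n converge to d. Then the block lengths satisfy lim_{n→∞} L_{n+1}/L_n = α. -/

import Mathlib

/-- Generation operator: expand a run-length vector `R` starting with symbol `s`,
alternating between `s` and `4 - s` from run to run. -/
def G : List ℕ → ℕ → List ℕ
  | [], _ => []
  | r :: rs, s => List.replicate r s ++ G rs (4 - s)

/-- Pillar sequences: `P 1 = [3]`, `P (n+1) = G (P n) 3` for `n ≥ 1`. -/
def P : ℕ → List ℕ
  | 0 => []
  | 1 => [3]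
  | n + 2 => G (P (n + 1)) 3

/-- Block sequences: `B 1 = G [1,3,3,3,1] 1`, `B (n+1) = B n ++ P n ++ B n` for `n ≥ 1`. -/
def B : ℕ → List ℕ
  | 0 => []
  | 1 => G [1, 3, 3, 3, 1] 1
  | n + 2 => B (n + 1) ++ P (n + 1) ++ B (n + 1)

lemma G_length : ∀ (rs : List ℕ) (s : ℕ), (G rs s).length = rs.sum
  | [], _ => rfl
  | r :: rs, s => by simp [G, G_length rs]

lemma G_mem : ∀ (rs : List ℕ) (s : ℕ), (s = 1 ∨ s = 3) → ∀ x ∈ G rs s, x = 1 ∨ x = 3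
  | [], _, _, x, hx => by simp [G] at hx
  | r :: rs, s, hs, x, hx => by
    rw [G, List.mem_append] at hx
    rcases hx with hx | hx
    · rw [List.eq_of_mem_replicate hx]; exact hs
    · exact G_mem rs (4 - s) (by rcases hs with h | h <;> subst h <;> simp) x hx

lemma P_mem : ∀ n, ∀ x ∈ P n, x = 1 ∨ x = 3
  | 0, x, hx => by simp [P] at hx
  | 1, x, hx => by simp [P] at hx; right; exact hx
  | n + 2, x, hx => G_mem (P (n + 1)) 3 (Or.inr rfl) x hx

lemma sum_count : ∀ (l : List ℕ), (∀ x ∈ l, x = 1 ∨ x = 3) →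
    l.sum + 2 * l.count 1 = 3 * l.length
  | [], _ => rfl
  | a :: l, h => by
    have ha := h a (by simp)
    have ih := sum_count l (fun x hx => h x (by simp [hx]))
    rcases ha with h1 | h3 <;> subst a <;>
      simp [List.count_cons, List.sum_cons] <;> omega

lemma P_len_pos : ∀ n, 1 ≤ n → 0 < (P n).length
  | 1, _ => by simp [P]
  | n + 2, _ => by
    have h1 : 0 < (P (n + 1)).length := P_len_pos (n + 1) (by omega)
    have h2 := sum_count (P (n + 1)) (P_mem (n + 1))
    have h3 : (P (n + 1)).count 1 ≤ (P (n + 1)).length := List.count_le_length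
    have : (P (n + 2)).length = (P (n + 1)).sum := by rw [show P (n+2) = G (P (n+1)) 3 from rfl, G_length]
    omega

lemma B_len : ∀ n, (B (n + 2)).length = 2 * (B (n + 1)).length + (P (n + 1)).length := by
  intro n
  show (B (n+1) ++ P (n+1) ++ B (n+1)).length = _
  simp [List.length_append]; ring

lemma B_len_pos : ∀ n, 1 ≤ n → 0 < (B n).length
  | 1, _ => by decide
  | n + 2, _ => by
    have := B_len_pos (n + 1) (by omega)
    rw [B_len]; omega

lemma m_rec : ∀ n, 1 ≤ n →
    (P (n + 1)).length + 2 * (P n).count 1 = 3 * (P n).length := by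
  intro n hn
  obtain ⟨k, rfl⟩ : ∃ k, n = k + 1 := ⟨n - 1, by omega⟩
  rw [show P (k + 2) = G (P (k + 1)) 3 from rfl, G_length]
  exact sum_count _ (P_mem _)

lemma contract_tendsto_zero (e ε : ℕ → ℝ) (q : ℝ) (hq0 : 0 ≤ q) (hq1 : q < 1)
    (he : ∀ n, 0 ≤ e n) (hε : Filter.Tendsto ε Filter.atTop (nhds 0))
    (hrec : ∀ᶠ n in Filter.atTop, e (n + 1) ≤ q * e n + ε n) :
    Filter.Tendsto e Filter.atTop (nhds 0) := by
  rw [Metric.tendsto_atTop]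
  intro δ hδ
  have hs : (0:ℝ) < (1 - q) * δ / 2 := by
    have : 0 < 1 - q := by linarith
    positivity
  have hεev : ∀ᶠ n in Filter.atTop, ε n < (1 - q) * δ / 2 :=
    hε.eventually_lt_const hs
  obtain ⟨N, hN⟩ := Filter.eventually_atTop.mp (hrec.and hεev)
  have claim : ∀ k, e (N + k) ≤ q ^ k * e N + δ / 2 := by
    intro k
    induction k with
    | zero => simp; linarith
    | succ k ih =>
      obtain ⟨h1, h2⟩ := hN (N + k) (by omega)
      have h3 : q * e (N + k) ≤ q * (q ^ k * e N + δ / 2) :=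
        mul_le_mul_of_nonneg_left ih hq0
      have : e (N + (k + 1)) = e (N + k + 1) := by ring_nf
      rw [this]
      calc e (N + k + 1) ≤ q * e (N + k) + ε (N + k) := h1
        _ ≤ q * (q ^ k * e N + δ / 2) + (1 - q) * δ / 2 := by linarith
        _ = q ^ (k + 1) * e N + δ / 2 := by ring
  have hpow : Filter.Tendsto (fun k => q ^ k * e N) Filter.atTop (nhds 0) := by
    have := (tendsto_pow_atTop_nhds_zero_of_lt_one hq0 hq1).mul_const (e N)
    simpa using this
  obtain ⟨K, hK⟩ := Filter.eventually_atTop.mp (hpow.eventually_lt_const (half_pos hδ))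
  refine ⟨N + K, fun n hn => ?_⟩
  have h4 := claim (n - N)
  rw [Nat.add_sub_cancel' (by omega : N ≤ n)] at h4
  have h5 := hK (n - N) (by omega)
  rw [Real.dist_eq, sub_zero, abs_of_nonneg (he n)]
  linarith

open Filter in
/-- Let `α > 2` be the real root of `x³ − 2x² − 1 = 0` and `d = (3 − α)/2`. If the
pillar densities `δ n = o n / m n` converge to `d`, then `L (n+1) / L n → α`. -/
theorem block_growth_rate (α : ℝ) (hα2 : 2 < α) (hα : α ^ 3 - 2 * α ^ 2 - 1 = 0)
    (d : ℝ) (hd : d = (3 - α) / 2)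
    (hlim : Filter.Tendsto
      (fun n => ((P n).count 1 : ℝ) / ((P n).length : ℝ)) Filter.atTop (nhds d)) :
    Filter.Tendsto
      (fun n => ((B (n + 1)).length : ℝ) / ((B n).length : ℝ))
      Filter.atTop (nhds α) := by
  set m : ℕ → ℝ := fun n => ((P n).length : ℝ) with hm_def
  set l : ℕ → ℝ := fun n => ((B n).length : ℝ) with hl_def
  have hα0 : (0:ℝ) < α := by linarith
  have hm : ∀ n, 1 ≤ n → 0 < m n := fun n hn => by
    simp only [hm_def]; exact_mod_cast P_len_pos n hn
  have hl : ∀ n, 1 ≤ n → 0 < l n := fun n hn => by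
    simp only [hl_def]; exact_mod_cast B_len_pos n hn
  -- ρ n = m (n+1) / m n tends to α
  set ρ : ℕ → ℝ := fun n => m (n + 1) / m n with hρ_def
  have hρ : Tendsto ρ atTop (nhds α) := by
    have h1 : Tendsto (fun n => 3 - 2 * (((P n).count 1 : ℝ) / ((P n).length : ℝ)))
        atTop (nhds (3 - 2 * d)) :=
      tendsto_const_nhds.sub (hlim.const_mul 2)
    have h2 : 3 - 2 * d = α := by rw [hd]; ring
    rw [h2] at h1
    refine h1.congr' ?_
    filter_upwards [eventually_ge_atTop 1] with n hn
    have hrec := m_rec n hn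
    have hmn := hm n hn
    have : m (n + 1) = 3 * m n - 2 * ((P n).count 1 : ℝ) := by
      have := congrArg (fun x : ℕ => (x : ℝ)) hrec
      push_cast at this
      simp only [hm_def]
      linarith
    symm
    show m (n + 1) / m n = 3 - 2 * (((P n).count 1 : ℝ) / ((P n).length : ℝ))
    rw [this]
    have hmn' : ((P n).length : ℝ) ≠ 0 := by
      simpa [hm_def] using hmn.ne'
    have hmm : m n = ((P n).length : ℝ) := rfl
    rw [hmm]
    field_simp
  -- y n = l n / m n tends to c = 1/(α-2)
  set c : ℝ := 1 / (α - 2) with hc_def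
  have hα2' : α - 2 ≠ 0 := by linarith
  have hα2'' : (0:ℝ) < α - 2 := by linarith
  have hc_pos : 0 < c := by rw [hc_def]; positivity
  have hcα : α * c = 2 * c + 1 := by rw [hc_def]; field_simp; ring
  set y : ℕ → ℝ := fun n => l n / m n with hy_def
  have hyrec : ∀ n, 1 ≤ n → y (n + 1) = (2 * y n + 1) / ρ n := by
    intro n hn
    have hln : l (n + 1) = 2 * l n + m n := by
      obtain ⟨k, rfl⟩ : ∃ k, n = k + 1 := ⟨n - 1, by omega⟩
      have := B_len k
      simp only [hl_def, hm_def]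
      exact_mod_cast this
    have hmn := (hm n hn).ne'
    have hmn1 := (hm (n + 1) (by omega)).ne'
    show l (n + 1) / m (n + 1) = (2 * (l n / m n) + 1) / (m (n + 1) / m n)
    rw [hln]
    field_simp
  have hq1 : (4 : ℝ) / (2 + α) < 1 := by
    rw [div_lt_one (by linarith)]; linarith
  have hq0 : (0 : ℝ) ≤ 4 / (2 + α) := by positivity
  set ε : ℕ → ℝ := fun n => |2 * c + 1| * |1 / ρ n - 1 / α| with hε_def
  have hε : Tendsto ε atTop (nhds 0) := by
    have h1 : Tendsto (fun n => 1 / ρ n) atTop (nhds (1 / α)) := by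
      simpa [one_div] using hρ.inv₀ (ne_of_gt hα0)
    have h2 : Tendsto (fun n => |1 / ρ n - 1 / α|) atTop (nhds 0) := by
      have h3 : Tendsto (fun n => 1 / ρ n - 1 / α) atTop (nhds (1 / α - 1 / α)) :=
        h1.sub (tendsto_const_nhds (x := 1 / α))
      simpa using h3.abs
    have := h2.const_mul |2 * c + 1|
    simpa [hε_def] using this
  have hρev : ∀ᶠ n in atTop, (2 + α) / 2 < ρ n :=
    hρ.eventually_const_lt (by linarith)
  have heyz : Tendsto (fun n => |y n - c|) atTop (nhds 0) := by
    apply contract_tendsto_zero _ ε (4 / (2 + α)) hq0 hq1 (fun n => abs_nonneg _) hε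
    filter_upwards [hρev, eventually_ge_atTop 1] with n hρn hn
    have hρpos : 0 < ρ n := by linarith
    have key : y (n + 1) - c = 2 * (y n - c) / ρ n + (2 * c + 1) * (1 / ρ n - 1 / α) := by
      rw [hyrec n hn]
      have h1 : (2 * c + 1) * (1 / α) = c := by
        rw [← hcα, mul_one_div, mul_div_cancel_left₀ _ hα0.ne']
      linear_combination h1
    calc |y (n + 1) - c| = |2 * (y n - c) / ρ n + (2 * c + 1) * (1 / ρ n - 1 / α)| := by
            rw [key]
      _ ≤ |2 * (y n - c) / ρ n| + |(2 * c + 1) * (1 / ρ n - 1 / α)| := abs_add_le _ _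
      _ = (2 / ρ n) * |y n - c| + ε n := by
            rw [abs_mul, hε_def]
            congr 1
            rw [abs_div, abs_mul]
            rw [abs_of_pos hρpos, abs_of_nonneg (by norm_num : (0:ℝ) ≤ 2)]
            ring
      _ ≤ 4 / (2 + α) * |y n - c| + ε n := by
            have : 2 / ρ n ≤ 4 / (2 + α) := by
              rw [div_le_div_iff₀ hρpos (by linarith)]
              linarith
            have := mul_le_mul_of_nonneg_right this (abs_nonneg (y n - c))
            linarith
  have hy : Tendsto y atTop (nhds c) := by
    rw [tendsto_iff_dist_tendsto_zero]
    simpa [Real.dist_eq] using heyz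
  -- conclude
  have hyinv : Tendsto (fun n => 2 + (y n)⁻¹) atTop (nhds α) := by
    have := (hy.inv₀ (ne_of_gt hc_pos)).const_add 2
    have hc2 : 2 + c⁻¹ = α := by rw [hc_def]; field_simp; ring
    rwa [hc2] at this
  refine hyinv.congr' ?_
  filter_upwards [eventually_ge_atTop 1] with n hn
  have hln : l (n + 1) = 2 * l n + m n := by
    obtain ⟨k, rfl⟩ : ∃ k, n = k + 1 := ⟨n - 1, by omega⟩
    have := B_len k
    simp only [hl_def, hm_def]
    exact_mod_cast this
  have hlp := (hl n hn).ne'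
  have hmp := (hm n hn).ne'
  show 2 + (l n / m n)⁻¹ = l (n + 1) / l n
  rw [hln]
  field_simp
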